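/- For all p > 1 and all integers j ≥ 1, the sine Fourier coefficients of s_p(x) = sin_p(π_p x) satisfy |ŝ_p(j)| < 4π_p/(j²π²). -/

import Mathlib

open Real Set MeasureTheory intervalIntegral

noncomputable def pip (p : ℝ) : ℝ := 2 * π / (p * Real.sin (π / p))

noncomputable def Fp (p y : ℝ) : ℝ :=
  ∫ t in (0:ℝ)..y, (1 - t ^ p) ^ (-1 / p)

section prelim
variable {p : ℝ}

lemma expne (hp : 1 < p) : (-1/p : ℝ) ≠ 0 :=
  ne_of_lt (by rw [neg_div]; exact neg_neg_of_pos (by positivity))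

lemma pip_pos (hp : 1 < p) : 0 < pip p := by
  have h1 : 0 < π / p := div_pos pi_pos (by linarith)
  have h2 : π / p < π := by
    rw [div_lt_iff₀ (by linarith)]
    nlinarith [pi_pos]
  have : 0 < Real.sin (π / p) := Real.sin_pos_of_pos_of_lt_pi h1 h2
  exact div_pos (by positivity) (by positivity)

lemma rpow_lt_one' (hp : 1 < p) {t : ℝ} (h0 : 0 ≤ t) (h1 : t < 1) : t ^ p < 1 := by
  rcases eq_or_lt_of_le h0 with h | h
  · rw [← h, Real.zero_rpow (by positivity : (0:ℝ) < p).ne']; norm_num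
  · exact Real.rpow_lt_one h0 h1 (by positivity)

lemma integrand_pos (hp : 1 < p) {t : ℝ} (h0 : 0 ≤ t) (h1 : t < 1) :
    0 < (1 - t ^ p) ^ (-1 / p) :=
  Real.rpow_pos_of_pos (by linarith [rpow_lt_one' hp h0 h1]) _

lemma integrand_nonneg (hp : 1 < p) {t : ℝ} (h0 : 0 ≤ t) (h1 : t ≤ 1) :
    0 ≤ (1 - t ^ p) ^ (-1 / p) := by
  rcases eq_or_lt_of_le h1 with h | h
  · subst h; rw [Real.one_rpow]; simp [Real.zero_rpow (expne hp)]
  · exact (integrand_pos hp h0 h).le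

lemma integrand_le (hp : 1 < p) {t : ℝ} (h0 : 0 ≤ t) (h1 : t ≤ 1) :
    (1 - t ^ p) ^ (-1 / p) ≤ (1 - t) ^ (-1 / p) := by
  have hple : t ^ p ≤ t := by
    rcases eq_or_lt_of_le h0 with h | h
    · rw [← h, Real.zero_rpow (by positivity : (0:ℝ) < p).ne']
    · calc t ^ p ≤ t ^ (1:ℝ) := Real.rpow_le_rpow_of_exponent_ge h h1 (by linarith)
        _ = t := Real.rpow_one t
  rcases eq_or_lt_of_le h1 with h | h
  · subst h
    rw [Real.one_rpow, sub_self, Real.zero_rpow (expne hp)]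
  · exact Real.rpow_le_rpow_of_nonpos (by linarith) (by linarith)
      (le_of_lt (by rw [neg_div]; exact neg_neg_of_pos (by positivity)))

lemma integrand_integrableOn (hp : 1 < p) :
    IntegrableOn (fun t : ℝ => (1 - t ^ p) ^ (-1 / p)) (Icc 0 1) := by
  have hg : IntegrableOn (fun t : ℝ => (1 - t) ^ (-1 / p)) (Icc 0 1) := by
    have h1 : IntervalIntegrable (fun x : ℝ => x ^ (-1/p)) volume 0 1 :=
      intervalIntegrable_rpow' (by
        have : 1/p < 1 := by rw [div_lt_one (by linarith)]; linarith
        rw [neg_div]; linarith)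
    have h2 := h1.comp_sub_left 1
    rw [show (1:ℝ) - 0 = 1 by ring, show (1:ℝ) - 1 = 0 by ring] at h2
    have := h2.symm
    rw [intervalIntegrable_iff_integrableOn_Icc_of_le (by norm_num)] at this
    exact this
  rw [integrableOn_Icc_iff_integrableOn_Ioo]
  have hg' : IntegrableOn (fun t : ℝ => (1 - t) ^ (-1 / p)) (Ioo 0 1) :=
    hg.mono_set Set.Ioo_subset_Icc_self
  have hfc : ContinuousOn (fun t : ℝ => (1 - t ^ p) ^ (-1 / p)) (Ioo 0 1) := by
    apply ContinuousOn.rpow_const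
    · exact (continuous_const.sub (Real.continuous_rpow_const (by linarith : (0:ℝ) ≤ p))).continuousOn
    · intro t ht
      exact Or.inl (ne_of_gt (by linarith [rpow_lt_one' hp ht.1.le ht.2]))
  apply Integrable.mono' hg' (hfc.aestronglyMeasurable measurableSet_Ioo)
  filter_upwards [ae_restrict_mem measurableSet_Ioo] with t ht
  rw [Real.norm_eq_abs, abs_of_nonneg (integrand_nonneg hp ht.1.le ht.2.le)]
  exact integrand_le hp ht.1.le ht.2.le

lemma integrand_intervalIntegrable (hp : 1 < p) {a b : ℝ} (ha : 0 ≤ a) (ha2 : a ≤ 1)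
    (hb : 0 ≤ b) (hb2 : b ≤ 1) :
    IntervalIntegrable (fun t : ℝ => (1 - t ^ p) ^ (-1 / p)) volume a b := by
  rw [intervalIntegrable_iff]
  exact (integrand_integrableOn hp).mono_set
    (subset_trans Set.uIoc_subset_uIcc (Set.uIcc_subset_Icc ⟨ha, ha2⟩ ⟨hb, hb2⟩))

lemma Fp_strictMonoOn (hp : 1 < p) : StrictMonoOn (Fp p) (Icc 0 1) := by
  intro y1 h1 y2 h2 hlt
  have key : Fp p y2 - Fp p y1 = ∫ t in y1..y2, (1 - t ^ p) ^ (-1 / p) := by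
    rw [Fp, Fp, ← intervalIntegral.integral_add_adjacent_intervals
      (integrand_intervalIntegrable hp le_rfl zero_le_one h1.1 h1.2)
      (integrand_intervalIntegrable hp h1.1 h1.2 h2.1 h2.2)]
    ring
  have hpos : 0 < ∫ t in y1..y2, (1 - t ^ p) ^ (-1 / p) := by
    apply intervalIntegral_pos_of_pos_on
      (integrand_intervalIntegrable hp h1.1 h1.2 h2.1 h2.2)
      (fun t ht => integrand_pos hp (le_trans h1.1 ht.1.le) (lt_of_lt_of_le ht.2 h2.2)) hlt
  linarith

lemma Fp_zero : Fp p 0 = 0 := by simp [Fp]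

lemma Fp_nonneg (hp : 1 < p) {y : ℝ} (h0 : 0 ≤ y) (h1 : y ≤ 1) : 0 ≤ Fp p y := by
  rcases eq_or_lt_of_le h0 with h | h
  · rw [← h, Fp_zero]
  · have := Fp_strictMonoOn hp (Set.left_mem_Icc.2 zero_le_one) ⟨h0, h1⟩ h
    rw [Fp_zero] at this; exact this.le

end prelim

section sfacts
variable {p : ℝ} {s : ℝ → ℝ}

variable (hp : 1 < p)
  (hmem : ∀ x ∈ Icc (0:ℝ) (1/2), s x ∈ Icc (0:ℝ) 1)
  (hFp : ∀ x ∈ Icc (0:ℝ) (1/2), Fp p (s x) = pip p * x)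

include hp hmem hFp

lemma s_zero : s 0 = 0 := by
  have h0 : (0:ℝ) ∈ Icc (0:ℝ) (1/2) := by constructor <;> norm_num
  have := hFp 0 h0
  rw [mul_zero] at this
  have := (Fp_strictMonoOn hp).injOn (hmem 0 h0) (Set.left_mem_Icc.2 zero_le_one)
    (by rw [this, Fp_zero])
  exact this

lemma s_strictMonoOn : StrictMonoOn s (Icc 0 (1/2)) := by
  intro x hx y hy hxy
  by_contra hle
  push_neg at hle
  have h1 : Fp p (s y) ≤ Fp p (s x) :=
    (Fp_strictMonoOn hp).monotoneOn (hmem y hy) (hmem x hx) hle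
  rw [hFp x hx, hFp y hy] at h1
  have := pip_pos hp
  nlinarith

lemma s_surj : ∀ y, 0 ≤ y → y ≤ s (1/2) → ∃ x ∈ Icc (0:ℝ) (1/2), s x = y := by
  intro y hy0 hy1
  have hhalf : (1/2:ℝ) ∈ Icc (0:ℝ) (1/2) := by constructor <;> norm_num
  have hs12 := hmem (1/2) hhalf
  have hymem : y ∈ Icc (0:ℝ) 1 := ⟨hy0, hy1.trans hs12.2⟩
  have hFy0 : 0 ≤ Fp p y := Fp_nonneg hp hymem.1 hymem.2
  have hFy1 : Fp p y ≤ pip p * (1/2) := by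
    rw [← hFp (1/2) hhalf]
    exact (Fp_strictMonoOn hp).monotoneOn hymem hs12 hy1
  set x := Fp p y / pip p with hxdef
  have hpip := pip_pos hp
  have hx : x ∈ Icc (0:ℝ) (1/2) := by
    constructor
    · exact div_nonneg hFy0 hpip.le
    · rw [div_le_iff₀ hpip]; linarith [hFy1]
  refine ⟨x, hx, ?_⟩
  apply (Fp_strictMonoOn hp).injOn (hmem x hx) hymem
  rw [hFp x hx, hxdef, mul_div_cancel₀ _ hpip.ne']

lemma s_continuousOn : ContinuousOn s (Icc 0 (1/2)) := by
  have hmono := s_strictMonoOn hp hmem hFp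
  have hsurj := s_surj hp hmem hFp
  have hmono' := hmono.monotoneOn
  have hhalf : (1/2:ℝ) ∈ Icc (0:ℝ) (1/2) := by constructor <;> norm_num
  have hright : ∀ a : ℝ, a ∈ Ico (0:ℝ) (1/2) → ContinuousWithinAt s (Ici a) a := by
    intro a ha
    have ha' : a ∈ Icc (0:ℝ) (1/2) := ⟨ha.1, ha.2.le⟩
    apply hmono.continuousWithinAt_right_of_exists_between
      (Icc_mem_nhdsGE_of_mem ha)
    intro b hb
    have hsa : s a < s (1/2) := hmono ha' hhalf ha.2
    have hsa0 : 0 ≤ s a := (hmem a ha').1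
    obtain ⟨c, hc, hsc⟩ := hsurj (min b (s (1/2))) (le_min (by linarith) (by linarith))
      (min_le_right _ _)
    exact ⟨c, hc, by rw [hsc]; exact ⟨lt_min hb hsa, min_le_left _ _⟩⟩
  have hleft : ∀ a : ℝ, a ∈ Ioc (0:ℝ) (1/2) → ContinuousWithinAt s (Iic a) a := by
    intro a ha
    have ha' : a ∈ Icc (0:ℝ) (1/2) := ⟨ha.1.le, ha.2⟩
    apply hmono.continuousWithinAt_left_of_exists_between
      (Icc_mem_nhdsLE_of_mem ha)
    intro b hb
    have h0 : (0:ℝ) ∈ Icc (0:ℝ) (1/2) := by constructor <;> norm_num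
    have hsa : 0 < s a := by
      have := hmono h0 ha' ha.1
      rwa [s_zero hp hmem hFp] at this
    have hsa1 : s a ≤ s (1/2) := hmono' ha' hhalf ha.2
    obtain ⟨c, hc, hsc⟩ := hsurj (max b 0) (le_max_right _ _)
      (by apply le_trans _ hsa1; apply le_of_lt; exact max_lt hb hsa)
    exact ⟨c, hc, by rw [hsc]; exact ⟨le_max_left _ _, max_lt hb hsa⟩⟩
  intro a ha
  rcases eq_or_lt_of_le ha.1 with h0 | h0
  · have ha0 : a = 0 := h0.symm
    subst ha0
    exact ((hright 0 ⟨le_rfl, by norm_num⟩).mono Icc_subset_Ici_self)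
  rcases eq_or_lt_of_le ha.2 with h1 | h1
  · rw [h1] at h0 ⊢
    exact ((hleft _ ⟨h0, le_rfl⟩).mono Icc_subset_Iic_self)
  · exact (continuousAt_iff_continuous_left_right.2
      ⟨hleft a ⟨h0, ha.2⟩, hright a ⟨ha.1, h1⟩⟩).continuousWithinAt

lemma s_continuousAt {x : ℝ} (hx : x ∈ Ioo (0:ℝ) (1/2)) : ContinuousAt s x :=
  (s_continuousOn hp hmem hFp).continuousAt (Icc_mem_nhds hx.1 hx.2)

lemma s_mem_Ioo {x : ℝ} (hx : x ∈ Ioo (0:ℝ) (1/2)) : s x ∈ Ioo (0:ℝ) 1 := by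
  have hmono := s_strictMonoOn hp hmem hFp
  have h0 : (0:ℝ) ∈ Icc (0:ℝ) (1/2) := by constructor <;> norm_num
  have hhalf : (1/2:ℝ) ∈ Icc (0:ℝ) (1/2) := by constructor <;> norm_num
  have hx' : x ∈ Icc (0:ℝ) (1/2) := ⟨hx.1.le, hx.2.le⟩
  constructor
  · have := hmono h0 hx' hx.1
    rwa [s_zero hp hmem hFp] at this
  · exact lt_of_lt_of_le (hmono hx' hhalf hx.2) (hmem _ hhalf).2

lemma s_hasDerivAt {x : ℝ} (hx : x ∈ Ioo (0:ℝ) (1/2)) :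
    HasDerivAt s (pip p * (1 - s x ^ p) ^ (1/p)) x := by
  have hpip := pip_pos hp
  have hsx := s_mem_Ioo hp hmem hFp hx
  have hbase : 0 < 1 - s x ^ p := by linarith [rpow_lt_one' hp hsx.1.le hsx.2]
  -- derivative of Fp at s x
  have hFderiv : HasDerivAt (Fp p) ((1 - (s x) ^ p) ^ (-1/p)) (s x) := by
    apply intervalIntegral.integral_hasDerivAt_right
      (integrand_intervalIntegrable hp le_rfl zero_le_one hsx.1.le hsx.2.le)
    · apply ContinuousAt.stronglyMeasurableAtFilter (s := Ioo (0:ℝ) 1) isOpen_Ioo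
      · intro t ht
        apply ContinuousAt.rpow_const
        · exact (continuous_const.sub (Real.continuous_rpow_const
            (by linarith : (0:ℝ) ≤ p))).continuousAt
        · exact Or.inl (ne_of_gt (by linarith [rpow_lt_one' hp ht.1.le ht.2]))
      · exact hsx
    · apply ContinuousAt.rpow_const
      · exact (continuous_const.sub (Real.continuous_rpow_const
          (by linarith : (0:ℝ) ≤ p))).continuousAt
      · exact Or.inl (ne_of_gt hbase)
  -- local inverse
  have hcg : ContinuousAt (fun y => s (y / pip p)) (pip p * x) := by
    apply ContinuousAt.comp
    · rw [mul_div_cancel_left₀ _ hpip.ne']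
      exact s_continuousAt hp hmem hFp hx
    · exact continuousAt_id.div_const _
  have hgax : (pip p * x) / pip p = x := mul_div_cancel_left₀ _ hpip.ne'
  have hinvloc : HasDerivAt (fun y => s (y / pip p)) (((1 - (s x) ^ p) ^ (-1/p))⁻¹) (pip p * x) := by
    have hev : ∀ᶠ y in nhds (pip p * x), Fp p (s (y / pip p)) = y := by
      have hopen : IsOpen ((fun y => y / pip p) ⁻¹' (Ioo (0:ℝ) (1/2))) :=
        (isOpen_Ioo).preimage (continuous_id.div_const _)
      have hmemx : (pip p * x) ∈ ((fun y => y / pip p) ⁻¹' (Ioo (0:ℝ) (1/2))) := by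
        simpa [hgax] using hx
      filter_upwards [hopen.mem_nhds hmemx] with y hy
      rw [hFp _ ⟨hy.1.le, hy.2.le⟩, mul_div_cancel₀ _ hpip.ne']
    have := HasDerivAt.of_local_left_inverse hcg (by rwa [hgax] : HasDerivAt (Fp p)
      ((1 - (s ((pip p * x) / pip p)) ^ p) ^ (-1/p)) (s ((pip p * x)/pip p)))
      (by rw [hgax]; exact (integrand_pos hp hsx.1.le hsx.2).ne') hev
    rwa [hgax] at this
  have hmul : HasDerivAt (fun x' : ℝ => pip p * x') (pip p) x := by
    simpa using (hasDerivAt_id x).const_mul (pip p)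
  have hcomp : HasDerivAt ((fun y => s (y / pip p)) ∘ (fun x' : ℝ => pip p * x'))
      (((1 - (s x) ^ p) ^ (-1/p))⁻¹ * pip p) x := by
    apply HasDerivAt.comp
    · exact hinvloc
    · exact hmul
  have heq : ((fun y => s (y / pip p)) ∘ (fun x' : ℝ => pip p * x')) = s := by
    funext x'
    simp only [Function.comp_apply]
    rw [mul_div_cancel_left₀ _ hpip.ne']
  rw [heq] at hcomp
  convert hcomp using 1
  rw [show (-1/p) = -(1/p) by ring, Real.rpow_neg hbase.le, inv_inv]
  ring

end sfacts

noncomputable def phi (p : ℝ) (s : ℝ → ℝ) (x : ℝ) : ℝ := pip p * (1 - s x ^ p) ^ (1/p)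

noncomputable def psi (p : ℝ) (s : ℝ → ℝ) (x : ℝ) : ℝ :=
  pip p * pip p * (s x ^ (p-1) * (1 - s x ^ p) ^ (2/p - 1))

section phifacts
variable {p : ℝ} {s : ℝ → ℝ}

variable (hp : 1 < p)
  (hmem : ∀ x ∈ Icc (0:ℝ) (1/2), s x ∈ Icc (0:ℝ) 1)
  (hFp : ∀ x ∈ Icc (0:ℝ) (1/2), Fp p (s x) = pip p * x)

include hp hmem hFp

lemma psi_nonneg {x : ℝ} (hx : x ∈ Icc (0:ℝ) (1/2)) : 0 ≤ psi p s x := by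
  unfold psi
  have h := hmem x hx
  have h1 : (0:ℝ) ≤ s x ^ (p-1) := Real.rpow_nonneg h.1 _
  have h2 : (0:ℝ) ≤ 1 - s x ^ p := by
    have := Real.rpow_le_one h.1 h.2 (by linarith : (0:ℝ) ≤ p)
    linarith
  have h3 := Real.rpow_nonneg h2 (2/p - 1)
  exact mul_nonneg (mul_self_nonneg _) (mul_nonneg h1 h3)

lemma s_hasDerivAt' {x : ℝ} (hx : x ∈ Ioo (0:ℝ) (1/2)) :
    HasDerivAt s (phi p s x) x := s_hasDerivAt hp hmem hFp hx

lemma phi_continuousOn : ContinuousOn (phi p s) (Icc 0 (1/2)) := by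
  unfold phi
  apply ContinuousOn.mul continuousOn_const
  apply ContinuousOn.rpow_const
  · apply ContinuousOn.sub continuousOn_const
    apply ContinuousOn.rpow_const (s_continuousOn hp hmem hFp)
    intro x _; right; linarith
  · intro x _; right; positivity

lemma phi_zero : phi p s 0 = pip p := by
  unfold phi
  rw [s_zero hp hmem hFp, Real.zero_rpow (by positivity : (0:ℝ) < p).ne', sub_zero,
    Real.one_rpow, mul_one]

lemma phi_nonneg {x : ℝ} (hx : x ∈ Icc (0:ℝ) (1/2)) : 0 ≤ phi p s x := by
  unfold phi
  have hpip := pip_pos hp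
  have h := hmem x hx
  have h0 : (0:ℝ) ≤ 1 - s x ^ p := by
    have := Real.rpow_le_one h.1 h.2 (by linarith : (0:ℝ) ≤ p)
    linarith
  exact mul_nonneg hpip.le (Real.rpow_nonneg h0 _)

lemma phi_le {x : ℝ} (hx : x ∈ Icc (0:ℝ) (1/2)) : phi p s x ≤ pip p := by
  unfold phi
  have hpip := pip_pos hp
  have h := hmem x hx
  have h1 : (0:ℝ) ≤ s x ^ p := Real.rpow_nonneg h.1 _
  have h0 : (0:ℝ) ≤ 1 - s x ^ p := by
    have := Real.rpow_le_one h.1 h.2 (by linarith : (0:ℝ) ≤ p)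
    linarith
  have h2 : (1 - s x ^ p) ^ (1/p) ≤ 1 :=
    Real.rpow_le_one h0 (by linarith) (by positivity)
  nlinarith

lemma phi_hasDerivAt {x : ℝ} (hx : x ∈ Ioo (0:ℝ) (1/2)) :
    HasDerivAt (phi p s) (-(psi p s x)) x := by
  have hpip := pip_pos hp
  have hsx := s_mem_Ioo hp hmem hFp hx
  have hbase : 0 < 1 - s x ^ p := by linarith [rpow_lt_one' hp hsx.1.le hsx.2]
  have hds := s_hasDerivAt' hp hmem hFp hx
  have h1 : HasDerivAt (fun y : ℝ => y ^ p) (p * s x ^ (p-1)) (s x) :=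
    Real.hasDerivAt_rpow_const (Or.inl hsx.1.ne')
  have h2 : HasDerivAt (fun x' => s x' ^ p) (p * s x ^ (p-1) * phi p s x) x :=
    h1.comp x hds
  have h3 : HasDerivAt (fun x' => 1 - s x' ^ p) (-(p * s x ^ (p-1) * phi p s x)) x :=
    (h2.const_sub 1)
  have h4 : HasDerivAt (fun y : ℝ => y ^ (1/p)) ((1/p) * (1 - s x ^ p) ^ (1/p - 1))
      (1 - s x ^ p) := Real.hasDerivAt_rpow_const (Or.inl hbase.ne')
  have h5 : HasDerivAt (fun x' => (1 - s x' ^ p) ^ (1/p))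
      ((1/p) * (1 - s x ^ p) ^ (1/p - 1) * -(p * s x ^ (p-1) * phi p s x)) x :=
    h4.comp (h := fun x' => 1 - s x' ^ p) x h3
  have h6 := h5.const_mul (pip p)
  refine h6.congr_deriv ?_
  symm
  unfold psi phi
  rw [show (2/p - 1 : ℝ) = (1/p - 1) + (1/p) by ring, Real.rpow_add hbase]
  field_simp

lemma psi_continuousOn : ContinuousOn (psi p s) (Ioo 0 (1/2)) := by
  unfold psi
  apply ContinuousOn.mul continuousOn_const
  have hsc : ContinuousOn s (Ioo 0 (1/2)) :=
    (s_continuousOn hp hmem hFp).mono Ioo_subset_Icc_self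
  apply ContinuousOn.mul
  · apply ContinuousOn.rpow_const hsc
    intro x hx; right; linarith
  · apply ContinuousOn.rpow_const
    · apply ContinuousOn.sub continuousOn_const
      apply ContinuousOn.rpow_const hsc
      intro x _; right; linarith
    · intro x hx
      have hsx := s_mem_Ioo hp hmem hFp hx
      exact Or.inl (ne_of_gt (by linarith [rpow_lt_one' hp hsx.1.le hsx.2]))

lemma psi_pos {x : ℝ} (hx : x ∈ Ioo (0:ℝ) (1/2)) : 0 < psi p s x := by
  have hpip := pip_pos hp
  have hsx := s_mem_Ioo hp hmem hFp hx
  have hbase : 0 < 1 - s x ^ p := by linarith [rpow_lt_one' hp hsx.1.le hsx.2]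
  unfold psi
  have h1 : 0 < s x ^ (p-1) := Real.rpow_pos_of_pos hsx.1 _
  have h2 : 0 < (1 - s x ^ p) ^ (2/p - 1) := Real.rpow_pos_of_pos hbase _
  positivity

lemma psi_intervalIntegrable : IntervalIntegrable (psi p s) volume 0 (1/2) := by
  apply intervalIntegrable_deriv_of_nonneg (g := fun x => -(phi p s x))
  · rw [Set.uIcc_of_le (by norm_num : (0:ℝ) ≤ 1/2)]
    exact (phi_continuousOn hp hmem hFp).neg
  · intro x hx
    rw [min_eq_left (by norm_num : (0:ℝ) ≤ 1/2), max_eq_right (by norm_num : (0:ℝ) ≤ 1/2)] at hx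
    have := (phi_hasDerivAt hp hmem hFp hx).neg; rwa [neg_neg] at this
  · intro x hx
    rw [min_eq_left (by norm_num : (0:ℝ) ≤ 1/2), max_eq_right (by norm_num : (0:ℝ) ≤ 1/2)] at hx
    exact psi_nonneg hp hmem hFp ⟨hx.1.le, hx.2.le⟩

lemma psi_total : ∫ x in (0:ℝ)..(1/2), psi p s x = pip p - phi p s (1/2) := by
  have hftc := intervalIntegral.integral_eq_sub_of_hasDeriv_right_of_le
    (f := fun x => -(phi p s x)) (f' := psi p s)
    (by norm_num : (0:ℝ) ≤ 1/2)
    ((phi_continuousOn hp hmem hFp).neg)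
    (fun x hx => by
      have := ((phi_hasDerivAt hp hmem hFp hx).neg).hasDerivWithinAt (s := Ioi x); rwa [neg_neg] at this)
    (psi_intervalIntegrable hp hmem hFp)
  rw [hftc]
  show -phi p s (1/2) - -phi p s 0 = _
  rw [phi_zero hp hmem hFp]
  ring

end phifacts

section ibp
variable {p : ℝ} {s : ℝ → ℝ} {c : ℝ}

variable (hp : 1 < p)
  (hmem : ∀ x ∈ Icc (0:ℝ) (1/2), s x ∈ Icc (0:ℝ) 1)
  (hFp : ∀ x ∈ Icc (0:ℝ) (1/2), Fp p (s x) = pip p * x)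
  (hc : 0 < c)

include hc

lemma hasDerivAt_negcos (x : ℝ) :
    HasDerivAt (fun y => -(Real.cos (c*y))/c) (Real.sin (c*x)) x := by
  have hmul : HasDerivAt (fun y : ℝ => c * y) c x := by
    simpa using (hasDerivAt_id x).const_mul c
  have h1 : HasDerivAt (fun y => Real.cos (c*y)) (-Real.sin (c*x) * c) x :=
    (Real.hasDerivAt_cos (c*x)).comp x hmul
  have h2 := (h1.neg).div_const c
  refine h2.congr_deriv ?_
  rw [neg_mul, neg_neg, mul_div_assoc, div_self hc.ne', mul_one]

lemma hasDerivAt_sindiv (x : ℝ) :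
    HasDerivAt (fun y => Real.sin (c*y)/c) (Real.cos (c*x)) x := by
  have hmul : HasDerivAt (fun y : ℝ => c * y) c x := by
    simpa using (hasDerivAt_id x).const_mul c
  have h1 : HasDerivAt (fun y => Real.sin (c*y)) (Real.cos (c*x) * c) x :=
    (Real.hasDerivAt_sin (c*x)).comp x hmul
  have h2 := h1.div_const c
  refine h2.congr_deriv ?_
  rw [mul_div_assoc, div_self hc.ne', mul_one]

include hp hmem hFp

lemma ibp1 :
    (∫ x in (0:ℝ)..(1/2), phi p s x * (-(Real.cos (c*x))/c))
      + (∫ x in (0:ℝ)..(1/2), s x * Real.sin (c*x))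
      = s (1/2) * (-(Real.cos (c*(1/2)))/c) := by
  have hI1 : IntervalIntegrable (fun x => phi p s x * (-(Real.cos (c*x))/c)) volume 0 (1/2) := by
    apply ContinuousOn.intervalIntegrable
    rw [Set.uIcc_of_le (by norm_num : (0:ℝ) ≤ 1/2)]
    exact (phi_continuousOn hp hmem hFp).mul
      (((Real.continuous_cos.comp (continuous_const.mul continuous_id)).neg.div_const c).continuousOn)
  have hI2 : IntervalIntegrable (fun x => s x * Real.sin (c*x)) volume 0 (1/2) := by
    apply ContinuousOn.intervalIntegrable
    rw [Set.uIcc_of_le (by norm_num : (0:ℝ) ≤ 1/2)]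
    exact (s_continuousOn hp hmem hFp).mul
      ((Real.continuous_sin.comp (continuous_const.mul continuous_id)).continuousOn)
  have hftc := intervalIntegral.integral_eq_sub_of_hasDeriv_right_of_le
    (f := fun x => s x * (-(Real.cos (c*x))/c))
    (f' := fun x => phi p s x * (-(Real.cos (c*x))/c) + s x * Real.sin (c*x))
    (by norm_num : (0:ℝ) ≤ 1/2)
    ((s_continuousOn hp hmem hFp).mul
      (((Real.continuous_cos.comp (continuous_const.mul continuous_id)).neg.div_const c).continuousOn))
    (fun x hx => (((s_hasDerivAt' hp hmem hFp hx).mul (hasDerivAt_negcos hc x))).hasDerivWithinAt)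
    (hI1.add hI2)
  rw [intervalIntegral.integral_add hI1 hI2] at hftc
  rw [hftc]
  show s (1/2) * (-(Real.cos (c*(1/2)))/c) - s 0 * (-(Real.cos (c*0))/c) = _
  rw [s_zero hp hmem hFp]
  ring

lemma ibp2 :
    (∫ x in (0:ℝ)..(1/2), -(psi p s x) * (Real.sin (c*x)/c))
      + (∫ x in (0:ℝ)..(1/2), phi p s x * Real.cos (c*x))
      = phi p s (1/2) * (Real.sin (c*(1/2))/c) := by
  have hI3 : IntervalIntegrable (fun x => -(psi p s x) * (Real.sin (c*x)/c)) volume 0 (1/2) := by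
    apply IntervalIntegrable.mul_continuousOn (psi_intervalIntegrable hp hmem hFp).neg
    exact ((Real.continuous_sin.comp (continuous_const.mul continuous_id)).div_const c).continuousOn
  have hI4 : IntervalIntegrable (fun x => phi p s x * Real.cos (c*x)) volume 0 (1/2) := by
    apply ContinuousOn.intervalIntegrable
    rw [Set.uIcc_of_le (by norm_num : (0:ℝ) ≤ 1/2)]
    exact (phi_continuousOn hp hmem hFp).mul
      ((Real.continuous_cos.comp (continuous_const.mul continuous_id)).continuousOn)
  have hftc := intervalIntegral.integral_eq_sub_of_hasDeriv_right_of_le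
    (f := fun x => phi p s x * (Real.sin (c*x)/c))
    (f' := fun x => -(psi p s x) * (Real.sin (c*x)/c) + phi p s x * Real.cos (c*x))
    (by norm_num : (0:ℝ) ≤ 1/2)
    ((phi_continuousOn hp hmem hFp).mul
      (((Real.continuous_sin.comp (continuous_const.mul continuous_id)).div_const c).continuousOn))
    (fun x hx => (((phi_hasDerivAt hp hmem hFp hx).mul (hasDerivAt_sindiv hc x))).hasDerivWithinAt)
    (hI3.add hI4)
  rw [intervalIntegral.integral_add hI3 hI4] at hftc
  rw [hftc]
  show phi p s (1/2) * (Real.sin (c*(1/2))/c) - phi p s 0 * (Real.sin (c*0)/c) = _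
  rw [mul_zero, Real.sin_zero, zero_div, mul_zero, sub_zero]

end ibp

section estimate
variable {p : ℝ} {s : ℝ → ℝ}

variable (hp : 1 < p)
  (hmem : ∀ x ∈ Icc (0:ℝ) (1/2), s x ∈ Icc (0:ℝ) 1)
  (hFp : ∀ x ∈ Icc (0:ℝ) (1/2), Fp p (s x) = pip p * x)

include hp hmem hFp

lemma S_bound (j : ℕ) (hj : 1 ≤ j) :
    ∃ m > 0, |∫ x in (0:ℝ)..(1/2), psi p s x * Real.sin (((j:ℝ)*π)*x)|
      ≤ (∫ x in (0:ℝ)..(1/2), psi p s x) - m := by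
  have hjpos : (0:ℝ) < (j:ℝ) := by exact_mod_cast hj
  have hj1 : (1:ℝ) ≤ (j:ℝ) := by exact_mod_cast hj
  set a : ℝ := 1/(24*(j:ℝ)) with hadef
  set b : ℝ := 1/(12*(j:ℝ)) with hbdef
  have ha : 0 < a := by positivity
  have hab : a < b := by
    rw [hadef, hbdef, div_lt_div_iff₀ (by positivity) (by positivity)]
    nlinarith
  have hb2 : b ≤ 1/12 := by
    rw [hbdef, div_le_div_iff₀ (by positivity) (by norm_num)]
    nlinarith [hj1]
  have hbhalf : b < 1/2 := by linarith
  have hsub1 : Set.uIcc (0:ℝ) a ⊆ Set.uIcc (0:ℝ) (1/2) := by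
    rw [Set.uIcc_of_le ha.le, Set.uIcc_of_le (by norm_num : (0:ℝ) ≤ 1/2)]
    exact Set.Icc_subset_Icc le_rfl (by linarith)
  have hsub2 : Set.uIcc a b ⊆ Set.uIcc (0:ℝ) (1/2) := by
    rw [Set.uIcc_of_le hab.le, Set.uIcc_of_le (by norm_num : (0:ℝ) ≤ 1/2)]
    exact Set.Icc_subset_Icc ha.le hbhalf.le
  have hsub3 : Set.uIcc b (1/2) ⊆ Set.uIcc (0:ℝ) (1/2) := by
    rw [Set.uIcc_of_le hbhalf.le, Set.uIcc_of_le (by norm_num : (0:ℝ) ≤ 1/2)]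
    exact Set.Icc_subset_Icc (by linarith) le_rfl
  have hpsiint := psi_intervalIntegrable hp hmem hFp
  have hsinc : Continuous (fun x : ℝ => Real.sin (((j:ℝ)*π)*x)) :=
    Real.continuous_sin.comp (continuous_const.mul continuous_id)
  have hpsint : IntervalIntegrable (fun x => psi p s x * Real.sin (((j:ℝ)*π)*x)) volume 0 (1/2) :=
    hpsiint.mul_continuousOn hsinc.continuousOn
  have hm0 : 0 < ∫ x in a..b, psi p s x := by
    apply intervalIntegral_pos_of_pos_on (hpsiint.mono_set hsub2)
    · intro x hx
      exact psi_pos hp hmem hFp ⟨lt_trans ha hx.1, lt_trans hx.2 hbhalf⟩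
    · exact hab
  refine ⟨(∫ x in a..b, psi p s x)/2, by linarith, ?_⟩
  -- pointwise facts
  have hpsinn : ∀ x ∈ Icc (0:ℝ) (1/2), 0 ≤ psi p s x := fun x hx => psi_nonneg hp hmem hFp hx
  have hsinle : ∀ x : ℝ, Real.sin (((j:ℝ)*π)*x) ≤ 1 := fun x => Real.sin_le_one _
  have hsinge : ∀ x : ℝ, -1 ≤ Real.sin (((j:ℝ)*π)*x) := fun x => Real.neg_one_le_sin _
  have hmid : ∀ x ∈ Icc a b, Real.sin (((j:ℝ)*π)*x) ≤ 1/2 ∧ 0 ≤ Real.sin (((j:ℝ)*π)*x) := by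
    intro x hx
    have hx0 : 0 ≤ ((j:ℝ)*π)*x := by
      have := pi_pos
      have : (0:ℝ) ≤ x := le_trans ha.le hx.1
      positivity
    have hxle : ((j:ℝ)*π)*x ≤ π/12 := by
      have h1 : x ≤ b := hx.2
      have h2 : ((j:ℝ)*π)*x ≤ ((j:ℝ)*π)*b := by
        apply mul_le_mul_of_nonneg_left h1 (by positivity)
      have h3 : ((j:ℝ)*π)*b = π/12 := by
        rw [hbdef]; field_simp
      linarith
    constructor
    · calc Real.sin (((j:ℝ)*π)*x) ≤ ((j:ℝ)*π)*x := Real.sin_le hx0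
        _ ≤ π/12 := hxle
        _ ≤ 1/2 := by linarith [Real.pi_le_four]
    · apply Real.sin_nonneg_of_nonneg_of_le_pi hx0
      linarith [Real.pi_pos]
  -- splitting
  have hadd1 : (∫ x in (0:ℝ)..a, psi p s x * Real.sin (((j:ℝ)*π)*x))
      + (∫ x in a..b, psi p s x * Real.sin (((j:ℝ)*π)*x))
      + (∫ x in b..(1/2:ℝ), psi p s x * Real.sin (((j:ℝ)*π)*x))
      = ∫ x in (0:ℝ)..(1/2), psi p s x * Real.sin (((j:ℝ)*π)*x) := by
    have hsub4 : Set.uIcc (0:ℝ) b ⊆ Set.uIcc (0:ℝ) (1/2) := by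
      rw [Set.uIcc_of_le (by linarith : (0:ℝ) ≤ b), Set.uIcc_of_le (by norm_num : (0:ℝ) ≤ 1/2)]
      exact Set.Icc_subset_Icc le_rfl hbhalf.le
    rw [intervalIntegral.integral_add_adjacent_intervals (hpsint.mono_set hsub1)
      (hpsint.mono_set hsub2)]
    exact intervalIntegral.integral_add_adjacent_intervals
      (hpsint.mono_set hsub4) (hpsint.mono_set hsub3)
  have hadd2 : (∫ x in (0:ℝ)..a, psi p s x)
      + (∫ x in a..b, psi p s x)
      + (∫ x in b..(1/2:ℝ), psi p s x)
      = ∫ x in (0:ℝ)..(1/2), psi p s x := by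
    have hsub4 : Set.uIcc (0:ℝ) b ⊆ Set.uIcc (0:ℝ) (1/2) := by
      rw [Set.uIcc_of_le (by linarith : (0:ℝ) ≤ b), Set.uIcc_of_le (by norm_num : (0:ℝ) ≤ 1/2)]
      exact Set.Icc_subset_Icc le_rfl hbhalf.le
    rw [intervalIntegral.integral_add_adjacent_intervals (hpsiint.mono_set hsub1)
      (hpsiint.mono_set hsub2)]
    exact intervalIntegral.integral_add_adjacent_intervals
      (hpsiint.mono_set hsub4) (hpsiint.mono_set hsub3)
  -- piece bounds
  have hIcc1 : Icc (0:ℝ) a ⊆ Icc (0:ℝ) (1/2) := Set.Icc_subset_Icc le_rfl (by linarith)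
  have hIcc2 : Icc a b ⊆ Icc (0:ℝ) (1/2) := Set.Icc_subset_Icc ha.le hbhalf.le
  have hIcc3 : Icc b (1/2:ℝ) ⊆ Icc (0:ℝ) (1/2) := Set.Icc_subset_Icc (by linarith) le_rfl
  have hup1 : (∫ x in (0:ℝ)..a, psi p s x * Real.sin (((j:ℝ)*π)*x))
      ≤ ∫ x in (0:ℝ)..a, psi p s x := by
    apply intervalIntegral.integral_mono_on ha.le (hpsint.mono_set hsub1)
      (hpsiint.mono_set hsub1)
    intro x hx
    exact mul_le_of_le_one_right (hpsinn x (hIcc1 hx)) (hsinle x)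
  have hup3 : (∫ x in b..(1/2:ℝ), psi p s x * Real.sin (((j:ℝ)*π)*x))
      ≤ ∫ x in b..(1/2:ℝ), psi p s x := by
    apply intervalIntegral.integral_mono_on hbhalf.le (hpsint.mono_set hsub3)
      (hpsiint.mono_set hsub3)
    intro x hx
    exact mul_le_of_le_one_right (hpsinn x (hIcc3 hx)) (hsinle x)
  have hup2 : (∫ x in a..b, psi p s x * Real.sin (((j:ℝ)*π)*x))
      ≤ (∫ x in a..b, psi p s x) / 2 := by
    have h1 : (∫ x in a..b, psi p s x * Real.sin (((j:ℝ)*π)*x))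
        ≤ ∫ x in a..b, psi p s x * (1/2) := by
      apply intervalIntegral.integral_mono_on hab.le (hpsint.mono_set hsub2)
        ((hpsiint.mono_set hsub2).mul_const _)
      intro x hx
      exact mul_le_mul_of_nonneg_left (hmid x hx).1 (hpsinn x (hIcc2 hx))
    rw [intervalIntegral.integral_mul_const] at h1
    linarith
  have hlo1 : -(∫ x in (0:ℝ)..a, psi p s x)
      ≤ ∫ x in (0:ℝ)..a, psi p s x * Real.sin (((j:ℝ)*π)*x) := by
    rw [← intervalIntegral.integral_neg]
    apply intervalIntegral.integral_mono_on ha.le (hpsiint.mono_set hsub1).neg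
      (hpsint.mono_set hsub1)
    intro x hx
    have := mul_le_mul_of_nonneg_left (hsinge x) (hpsinn x (hIcc1 hx))
    simpa using this
  have hlo3 : -(∫ x in b..(1/2:ℝ), psi p s x)
      ≤ ∫ x in b..(1/2:ℝ), psi p s x * Real.sin (((j:ℝ)*π)*x) := by
    rw [← intervalIntegral.integral_neg]
    apply intervalIntegral.integral_mono_on hbhalf.le (hpsiint.mono_set hsub3).neg
      (hpsint.mono_set hsub3)
    intro x hx
    have := mul_le_mul_of_nonneg_left (hsinge x) (hpsinn x (hIcc3 hx))
    simpa using this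
  have hlo2 : (0:ℝ) ≤ ∫ x in a..b, psi p s x * Real.sin (((j:ℝ)*π)*x) := by
    apply intervalIntegral.integral_nonneg hab.le
    intro x hx
    exact mul_nonneg (hpsinn x (hIcc2 hx)) (hmid x hx).2
  rw [abs_le]
  constructor
  · rw [← hadd1]
    linarith
  · rw [← hadd1]
    linarith

end estimate

section final
variable {p : ℝ} {s : ℝ → ℝ}

variable (hp : 1 < p)
  (hmem : ∀ x ∈ Icc (0:ℝ) (1/2), s x ∈ Icc (0:ℝ) 1)
  (hFp : ∀ x ∈ Icc (0:ℝ) (1/2), Fp p (s x) = pip p * x)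

include hp hmem hFp

lemma A_bound (j : ℕ) (hj : 1 ≤ j) (hodd : Odd j) :
    |∫ x in (0:ℝ)..(1/2), s x * Real.sin (((j:ℝ)*π)*x)|
      < pip p / (((j:ℝ)*π)^2) := by
  have hjpos : (0:ℝ) < (j:ℝ) := by exact_mod_cast hj
  set c : ℝ := (j:ℝ)*π with hcdef
  have hc : 0 < c := by rw [hcdef]; positivity
  have hcos0 : Real.cos (c*(1/2)) = 0 := by
    obtain ⟨k, hk⟩ := hodd
    have h1 : c*(1/2) = (k:ℝ)*π + π/2 := by
      rw [hcdef, hk]; push_cast; ring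
    rw [h1, Real.cos_add_pi_div_two, Real.sin_nat_mul_pi, neg_zero]
  have h1 := ibp1 hp hmem hFp hc
  have h2 := ibp2 hp hmem hFp hc
  set A := ∫ x in (0:ℝ)..(1/2), s x * Real.sin (c*x) with hA
  set B := ∫ x in (0:ℝ)..(1/2), phi p s x * Real.cos (c*x) with hB
  set S := ∫ x in (0:ℝ)..(1/2), psi p s x * Real.sin (c*x) with hS
  have hfun1 : (fun x => phi p s x * (-(Real.cos (c*x))/c))
      = fun x => (-(1/c)) * (phi p s x * Real.cos (c*x)) := by
    funext x; field_simp
  have hfun2 : (fun x => -(psi p s x) * (Real.sin (c*x)/c))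
      = fun x => (-(1/c)) * (psi p s x * Real.sin (c*x)) := by
    funext x; field_simp
  rw [hcos0] at h1
  rw [hfun1, intervalIntegral.integral_const_mul] at h1
  rw [hfun2, intervalIntegral.integral_const_mul] at h2
  -- h1 : (-(1/c)) * B + A = s(1/2) * (-0/c) = 0
  have hA' : A = B / c := by
    have : s (1/2) * (-(0:ℝ)/c) = 0 := by ring
    rw [this] at h1
    field_simp at h1 ⊢
    linarith
  have hB' : B = phi p s (1/2) * Real.sin (c*(1/2)) / c + S / c := by
    field_simp at h2 ⊢
    linarith
  have hAexp : A = (phi p s (1/2) * Real.sin (c*(1/2)) + S) / c^2 := by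
    rw [hA', hB', ← add_div, div_div, ← pow_two]
  obtain ⟨m, hm, hSb⟩ := S_bound hp hmem hFp j hj
  have hD := psi_total hp hmem hFp
  simp only [← hcdef] at hSb
  rw [← hS] at hSb
  have hphin : 0 ≤ phi p s (1/2) :=
    phi_nonneg hp hmem hFp (x := 1/2) ⟨by norm_num, le_rfl⟩
  have hsin1 : |Real.sin (c*(1/2))| ≤ 1 :=
    abs_le.mpr ⟨Real.neg_one_le_sin _, Real.sin_le_one _⟩
  have hnum : |phi p s (1/2) * Real.sin (c*(1/2)) + S| ≤ phi p s (1/2) + |S| := by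
    calc |phi p s (1/2) * Real.sin (c*(1/2)) + S|
        ≤ |phi p s (1/2) * Real.sin (c*(1/2))| + |S| := abs_add_le _ _
      _ ≤ phi p s (1/2) + |S| := by
          rw [abs_mul, abs_of_nonneg hphin]
          nlinarith [abs_nonneg S]
  have hnum2 : phi p s (1/2) + |S| < pip p := by
    rw [hD] at hSb
    linarith
  have hc2 : (0:ℝ) < c^2 := pow_pos hc 2
  calc |A| = |phi p s (1/2) * Real.sin (c*(1/2)) + S| / c^2 := by
        rw [hAexp, abs_div, abs_of_pos hc2]
    _ ≤ (phi p s (1/2) + |S|) / c^2 := by gcongr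
    _ < pip p / c^2 := by gcongr

end final

theorem stmt_15 (p : ℝ) (hp : 1 < p) (s : ℝ → ℝ)
    (hinv : ∀ x ∈ Set.Icc (0:ℝ) (1/2), s x ∈ Set.Icc (0:ℝ) 1 ∧ Fp p (s x) = pip p * x)
    (hodd : ∀ x, s (-x) = -s x)
    (heven : ∀ x, s (1 - x) = s x)
    (hper : ∀ x, s (x + 2) = s x)
    (j : ℕ) (hj : 1 ≤ j) :
    |2 * ∫ x in (0:ℝ)..1, s x * Real.sin (j * π * x)| < 4 * pip p / (j^2 * π^2) := by
  have hmem : ∀ x ∈ Icc (0:ℝ) (1/2), s x ∈ Icc (0:ℝ) 1 := fun x hx => (hinv x hx).1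
  have hFps : ∀ x ∈ Icc (0:ℝ) (1/2), Fp p (s x) = pip p * x := fun x hx => (hinv x hx).2
  have hpip := pip_pos hp
  have hjpos : (0:ℝ) < (j:ℝ) := by exact_mod_cast hj
  set c : ℝ := (j:ℝ)*π with hcdef
  have hc : 0 < c := by rw [hcdef]; positivity
  set g : ℝ → ℝ := fun x => s x * Real.sin (c*x) with hgdef
  set e : ℝ := -((-1:ℝ)^j) with hedef
  have hgid : ∀ x, g (1-x) = e * g x := by
    intro x
    have h1 : c*(1-x) = (j:ℝ)*π - c*x := by rw [hcdef]; ring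
    rw [hgdef]
    simp only
    rw [heven x, h1, Real.sin_nat_mul_pi_sub, hedef]
    ring
  have he2 : e * e = 1 := by
    rw [hedef, neg_mul_neg, ← pow_add]
    exact Even.neg_one_pow ⟨j, rfl⟩
  have hint0 : IntervalIntegrable g volume 0 (1/2) := by
    apply ContinuousOn.intervalIntegrable
    rw [Set.uIcc_of_le (by norm_num : (0:ℝ) ≤ 1/2)]
    exact (s_continuousOn hp hmem hFps).mul
      ((Real.continuous_sin.comp (continuous_const.mul continuous_id)).continuousOn)
  have hint1 : IntervalIntegrable g volume (1/2) 1 := by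
    have h' := (hint0.const_mul e).comp_sub_left 1
    norm_num at h'
    have heq : (fun x => e * g (1-x)) = g := by
      funext x
      rw [hgid x, ← mul_assoc, he2, one_mul]
    rw [heq] at h'
    exact h'.symm
  have hsplit : (∫ x in (0:ℝ)..1, g x)
      = (∫ x in (0:ℝ)..(1/2), g x) + ∫ x in (1/2:ℝ)..1, g x :=
    (intervalIntegral.integral_add_adjacent_intervals hint0 hint1).symm
  have hrefl : (∫ x in (1/2:ℝ)..1, g x) = e * ∫ x in (0:ℝ)..(1/2), g x := by
    have h0 := intervalIntegral.integral_comp_sub_left (a := 0) (b := 1/2) g 1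
    rw [show (1:ℝ) - 1/2 = 1/2 by norm_num, show (1:ℝ) - 0 = 1 by norm_num] at h0
    rw [← h0]
    have heq : (fun x => g (1-x)) = fun x => e * g x := funext fun x => hgid x
    rw [show (∫ x in (0:ℝ)..(1/2), g (1-x)) = ∫ x in (0:ℝ)..(1/2), e * g x by
      rw [heq], intervalIntegral.integral_const_mul]
  have htot : (∫ x in (0:ℝ)..1, g x) = (1 + e) * ∫ x in (0:ℝ)..(1/2), g x := by
    rw [hsplit, hrefl]; ring
  have hrhs : (4:ℝ) * pip p / (j^2 * π^2) = 4 * (pip p / c^2) := by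
    rw [hcdef]
    rw [mul_pow]
    push_cast
    ring
  have hgoal : |2 * ∫ x in (0:ℝ)..1, s x * Real.sin ((j:ℝ) * π * x)|
      = |2 * ∫ x in (0:ℝ)..1, g x| := by rfl
  rw [hgoal, hrhs]
  rcases Nat.even_or_odd j with hev | hod
  · have he : e = -1 := by
      rw [hedef, hev.neg_one_pow]
    rw [htot, he]
    rw [show (2:ℝ) * ((1 + -1) * ∫ x in (0:ℝ)..(1/2), g x) = 0 by ring, abs_zero]
    exact mul_pos (by norm_num) (div_pos hpip (pow_pos hc 2))
  · have he : e = 1 := by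
      rw [hedef, hod.neg_one_pow]; norm_num
    rw [htot, he]
    have hA := A_bound hp hmem hFps j hj hod
    rw [← hcdef] at hA
    have : |2 * ((1+1) * ∫ x in (0:ℝ)..(1/2), g x)| = 4 * |∫ x in (0:ℝ)..(1/2), g x| := by
      rw [abs_mul, abs_mul]
      norm_num
      ring
    rw [this]
    have h4 : (0:ℝ) < 4 := by norm_num
    calc 4 * |∫ x in (0:ℝ)..(1/2), g x| < 4 * (pip p / c^2) := by
          apply mul_lt_mul_of_pos_left _ h4
          exact hA
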